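/- Under the setting of the abstract affine problem with Gateaux differentiable objective 𝒥 (with weakly-strongly continuous switching map u ↦ d𝒥(u) from weak-L¹ to L^∞), let u* ∈ 𝒰 be a critical point at which the optimality mapping Φ(u) = d𝒥(u) + N_𝒰(u) is strongly subregular with radius κ̂ > 0. For p > 1 and η > 0, consider the regularized problem min_{u∈𝒰} {𝒥(u) + (η/p)∫_X |u(x)|^p dμ}. Then for every ε > 0 there exists η_ε > 0 such that for any η < η_ε, every local minimizer u_η of the regularized problem satisfying ‖u_η − u*‖_{L¹} < κ̂ satisfies ‖u_η − u*‖_{L¹} < ε. -/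

import Mathlib

open MeasureTheory Filter Topology Set
open scoped ENNReal

/-- Weak convergence in `L¹(X; ℝᵐ)`. -/
def WeakL1Conv {X : Type*} [MeasurableSpace X] {m : ℕ} (μ : Measure X)
    (fn : ℕ → X → EuclideanSpace ℝ (Fin m)) (f : X → EuclideanSpace ℝ (Fin m)) : Prop :=
  ∀ g : X → EuclideanSpace ℝ (Fin m), Measurable g → (∃ C, ∀ x, ‖g x‖ ≤ C) →
    Tendsto (fun n => ∫ x, (inner ℝ (fn n x) (g x) : ℝ) ∂μ) atTop
      (𝓝 (∫ x, (inner ℝ (f x) (g x) : ℝ) ∂μ))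

/-- The feasible set `𝒰 = {u ∈ L¹(X;ℝᵐ) : u(x) ∈ U a.e.}`. -/
def Feasible {X : Type*} [MeasurableSpace X] {m : ℕ} (μ : Measure X)
    (U : Set (EuclideanSpace ℝ (Fin m))) : Set (X → EuclideanSpace ℝ (Fin m)) :=
  {u | Integrable u μ ∧ ∀ᵐ x ∂μ, u x ∈ U}

/-- Weak sequential continuity of a functional `𝒥` on the feasible set. -/
def WeakSeqContinuousOn {X : Type*} [MeasurableSpace X] {m : ℕ} (μ : Measure X)
    (U : Set (EuclideanSpace ℝ (Fin m))) (J : (X → EuclideanSpace ℝ (Fin m)) → ℝ) : Prop :=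
  ∀ (un : ℕ → X → EuclideanSpace ℝ (Fin m)) (u : X → EuclideanSpace ℝ (Fin m)),
    (∀ n, un n ∈ Feasible μ U) → u ∈ Feasible μ U → WeakL1Conv μ un u →
      Tendsto (fun n => J (un n)) atTop (𝓝 (J u))
open scoped ENNReal

/-- `ξ ∈ 𝒥'(u) + N_𝒰(u)`, i.e. `ξ − d𝒥(u)` lies in the normal cone to `𝒰` at `u`
(in the `L¹`–`L^∞` pairing), with `ξ ∈ L^∞(X;ℝᵐ)`. -/
def PhiMem {X : Type*} [MeasurableSpace X] {m : ℕ} (μ : Measure X)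
    (U : Set (EuclideanSpace ℝ (Fin m)))
    (DJ : (X → EuclideanSpace ℝ (Fin m)) → X → EuclideanSpace ℝ (Fin m))
    (u ξ : X → EuclideanSpace ℝ (Fin m)) : Prop :=
  MemLp ξ ⊤ μ ∧
    ∀ v ∈ Feasible μ U, ∫ x, (inner ℝ (ξ x - DJ u x) (v x - u x) : ℝ) ∂μ ≤ 0

/-- Strong metric subregularity of the optimality mapping `Φ = d𝒥 + N_𝒰` at `u*`
with radius `κ`. -/
def SubregAt {X : Type*} [MeasurableSpace X] {m : ℕ} (μ : Measure X)
    (U : Set (EuclideanSpace ℝ (Fin m)))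
    (DJ : (X → EuclideanSpace ℝ (Fin m)) → X → EuclideanSpace ℝ (Fin m))
    (ustar : X → EuclideanSpace ℝ (Fin m)) (κ : ℝ) : Prop :=
  ∀ ε > 0, ∃ δ > 0, ∀ u ∈ Feasible μ U, ∀ ξ : X → EuclideanSpace ℝ (Fin m),
    PhiMem μ U DJ u ξ → ∫ x, ‖u x - ustar x‖ ∂μ ≤ κ →
    eLpNorm ξ ⊤ μ < ENNReal.ofReal δ → ∫ x, ‖u x - ustar x‖ ∂μ < ε

/-- `u*` is an isolated critical point with radius `δ`: every critical point within
`L¹`-distance `δ` of `u*` coincides (a.e.) with `u*`. -/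
def IsolatedCritAt {X : Type*} [MeasurableSpace X] {m : ℕ} (μ : Measure X)
    (U : Set (EuclideanSpace ℝ (Fin m)))
    (DJ : (X → EuclideanSpace ℝ (Fin m)) → X → EuclideanSpace ℝ (Fin m))
    (ustar : X → EuclideanSpace ℝ (Fin m)) (δ : ℝ) : Prop :=
  ∀ u ∈ Feasible μ U, PhiMem μ U DJ u 0 → ∫ x, ‖u x - ustar x‖ ∂μ ≤ δ →
    u =ᵐ[μ] ustar

section Helpers

variable {E : Type*} [NormedAddCommGroup E] [InnerProductSpace ℝ E]

lemma my_rpow_mul_self {p x : ℝ} (hp : 1 < p) (hx : 0 ≤ x) :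
    x ^ (p - 2) * x = x ^ (p - 1) := by
  rcases eq_or_lt_of_le hx with h | h
  · rw [← h, mul_zero, Real.zero_rpow (show p - 1 ≠ 0 by intro h; linarith)]
  · rw [show p - 1 = (p - 2) + 1 by ring, Real.rpow_add_one (ne_of_gt h)]

lemma my_abs_rpow_sub_rpow {p K r s : ℝ} (hp : 1 ≤ p)
    (hr : r ∈ Icc (0:ℝ) K) (hs : s ∈ Icc (0:ℝ) K) :
    |r ^ p - s ^ p| ≤ p * K ^ (p - 1) * |r - s| := by
  have hderiv : ∀ x ∈ Icc (0:ℝ) K,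
      HasDerivWithinAt (fun y : ℝ => y ^ p) (p * x ^ (p - 1)) (Icc 0 K) x :=
    fun x _ => (Real.hasDerivAt_rpow_const (Or.inr hp)).hasDerivWithinAt
  have hbound : ∀ x ∈ Icc (0:ℝ) K, ‖p * x ^ (p - 1)‖ ≤ p * K ^ (p - 1) := by
    intro x hx
    rw [Real.norm_eq_abs, abs_of_nonneg (mul_nonneg (by linarith) (Real.rpow_nonneg hx.1 _))]
    exact mul_le_mul_of_nonneg_left (Real.rpow_le_rpow hx.1 hx.2 (by linarith)) (by linarith)
  simpa [Real.norm_eq_abs] using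
    (convex_Icc 0 K).norm_image_sub_le_of_norm_hasDerivWithin_le hderiv hbound hs hr

lemma my_hmap_continuous {p : ℝ} (hp : 1 < p) :
    Continuous (fun w : E => (‖w‖ ^ (p - 2) : ℝ) • w) := by
  rw [continuous_iff_continuousAt]
  intro w
  rcases eq_or_ne w 0 with rfl | hw
  · rw [ContinuousAt]
    have h0 : (‖(0:E)‖ ^ (p - 2) : ℝ) • (0:E) = 0 := smul_zero _
    rw [h0]
    rw [tendsto_zero_iff_norm_tendsto_zero]
    apply squeeze_zero (fun _ => norm_nonneg _)
      (g := fun w : E => ‖w‖ ^ (p - 1))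
    · intro z
      rw [norm_smul, Real.norm_eq_abs, abs_of_nonneg (Real.rpow_nonneg (norm_nonneg z) _)]
      exact le_of_eq (my_rpow_mul_self hp (norm_nonneg z))
    · have hc : Continuous (fun w : E => ‖w‖ ^ (p - 1)) :=
        (Real.continuous_rpow_const (by linarith)).comp continuous_norm
      have := hc.tendsto (0 : E)
      simpa [Real.zero_rpow (show p - 1 ≠ 0 by intro h; linarith)] using this
  · exact ContinuousAt.smul
      ((Real.continuousAt_rpow_const _ _ (Or.inl (norm_ne_zero_iff.mpr hw))).comp
        continuous_norm.continuousAt) continuousAt_id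

lemma my_norm_sq_rpow (p : ℝ) (c : E) : ((‖c‖ ^ 2 : ℝ)) ^ (p / 2) = ‖c‖ ^ p := by
  rw [← Real.rpow_natCast ‖c‖ 2, ← Real.rpow_mul (norm_nonneg c)]
  norm_num
  rw [show (2:ℝ) * (p / 2) = p by ring]

lemma my_slope_tendsto {p : ℝ} (hp : 1 < p) (a b : E) :
    Tendsto (fun t : ℝ => (‖a + t • b‖ ^ p - ‖a‖ ^ p) / t) (𝓝[>] (0:ℝ))
      (𝓝 (p * (inner ℝ ((‖a‖ ^ (p - 2) : ℝ) • a) b : ℝ))) := by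
  rcases eq_or_ne a 0 with rfl | ha
  · have hlim : Tendsto (fun t : ℝ => t ^ (p - 1) * ‖b‖ ^ p) (𝓝[>] (0:ℝ)) (𝓝 0) := by
      have hc : Tendsto (fun t : ℝ => t ^ (p - 1)) (𝓝 (0:ℝ)) (𝓝 ((0:ℝ) ^ (p - 1))) :=
        (Real.continuousAt_rpow_const 0 (p - 1) (Or.inr (by linarith))).tendsto
      rw [Real.zero_rpow (show p - 1 ≠ 0 by intro h; linarith)] at hc
      simpa using (hc.mono_left nhdsWithin_le_nhds).mul_const (‖b‖ ^ p)
    have heq : ∀ᶠ t in 𝓝[>] (0:ℝ),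
        t ^ (p - 1) * ‖b‖ ^ p = (‖(0:E) + t • b‖ ^ p - ‖(0:E)‖ ^ p) / t := by
      filter_upwards [self_mem_nhdsWithin] with t ht
      have ht' : (0:ℝ) < t := ht
      rw [zero_add, norm_smul, Real.norm_eq_abs, abs_of_pos ht', norm_zero,
        Real.zero_rpow (show p ≠ 0 by intro h; linarith),
        Real.mul_rpow (le_of_lt ht') (norm_nonneg b), sub_zero,
        show p = (p - 1) + 1 by ring, Real.rpow_add_one (ne_of_gt ht')]
      field_simp
      ring
    have := hlim.congr' heq
    simpa using this
  · -- differentiable case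
    have hφ : HasDerivAt (fun t : ℝ => ‖a‖ ^ 2 + 2 * (inner ℝ a b : ℝ) * t + ‖b‖ ^ 2 * t ^ 2)
        (2 * (inner ℝ a b : ℝ)) 0 := by
      have h1 : HasDerivAt (fun t : ℝ => 2 * (inner ℝ a b : ℝ) * t) (2 * (inner ℝ a b : ℝ)) 0 := by
        simpa using (hasDerivAt_id (0:ℝ)).const_mul (2 * (inner ℝ a b : ℝ))
      have h2 : HasDerivAt (fun t : ℝ => ‖b‖ ^ 2 * t ^ 2) 0 0 := by
        simpa using (hasDerivAt_pow 2 (0:ℝ)).const_mul (‖b‖ ^ 2)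
      simpa [← add_assoc] using ((h1.add h2).const_add (‖a‖ ^ 2))
    have hφ0 : (‖a‖ ^ 2 + 2 * (inner ℝ a b : ℝ) * (0:ℝ) + ‖b‖ ^ 2 * (0:ℝ) ^ 2) = ‖a‖ ^ 2 := by
      ring
    have hchain : HasDerivAt
        (fun t : ℝ => (‖a‖ ^ 2 + 2 * (inner ℝ a b : ℝ) * t + ‖b‖ ^ 2 * t ^ 2) ^ (p / 2))
        ((p / 2) * (‖a‖ ^ 2 : ℝ) ^ (p / 2 - 1) * (2 * (inner ℝ a b : ℝ))) 0 := by
      have hne : (‖a‖ ^ 2 + 2 * (inner ℝ a b : ℝ) * (0:ℝ) + ‖b‖ ^ 2 * (0:ℝ) ^ 2) ≠ 0 := by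
        rw [hφ0]; exact pow_ne_zero _ (norm_ne_zero_iff.mpr ha)
      have := (Real.hasDerivAt_rpow_const (p := p / 2) (Or.inl hne)).comp 0 hφ
      simp only [hφ0] at this
      exact this
    have hfun : ∀ t : ℝ, (‖a‖ ^ 2 + 2 * (inner ℝ a b : ℝ) * t + ‖b‖ ^ 2 * t ^ 2) ^ (p / 2)
        = ‖a + t • b‖ ^ p := by
      intro t
      have : ‖a + t • b‖ ^ 2 = ‖a‖ ^ 2 + 2 * (inner ℝ a b : ℝ) * t + ‖b‖ ^ 2 * t ^ 2 := by
        rw [norm_add_sq_real, real_inner_smul_right, norm_smul, Real.norm_eq_abs,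
          mul_pow, sq_abs]
        ring
      rw [← this, my_norm_sq_rpow]
    have hD : HasDerivAt (fun t : ℝ => ‖a + t • b‖ ^ p)
        (p * (inner ℝ ((‖a‖ ^ (p - 2) : ℝ) • a) b : ℝ)) 0 := by
      have h2 : ((‖a‖ ^ 2 : ℝ)) ^ (p / 2 - 1) = ‖a‖ ^ (p - 2) := by
        rw [← Real.rpow_natCast ‖a‖ 2, ← Real.rpow_mul (norm_nonneg a)]
        norm_num
        rw [show (2:ℝ) * (p / 2 - 1) = p - 2 by ring]
      have := hchain
      simp only [hfun] at this
      convert this using 1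
      rw [real_inner_smul_left, h2]
      ring
    have hslope := hasDerivAt_iff_tendsto_slope.mp hD
    have hmono : 𝓝[>] (0:ℝ) ≤ 𝓝[≠] (0:ℝ) :=
      nhdsWithin_mono _ (fun t ht => ne_of_gt ht)
    have := hslope.mono_left hmono
    apply this.congr
    intro t
    simp [slope_def_field]

lemma my_memTop_bound {X : Type*} [MeasurableSpace X] {μ : Measure X}
    {F : Type*} [NormedAddCommGroup F] {f : X → F} (hf : MemLp f ⊤ μ) :
    ∃ C : ℝ, 0 ≤ C ∧ ∀ᵐ x ∂μ, ‖f x‖ ≤ C := by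
  refine ⟨(eLpNormEssSup f μ).toReal, ENNReal.toReal_nonneg, ?_⟩
  have hlt : eLpNormEssSup f μ < ⊤ := by
    have := hf.2; rwa [eLpNorm_exponent_top] at this
  filter_upwards [enorm_ae_le_eLpNormEssSup f μ] with x hx
  calc ‖f x‖ = (‖f x‖ₑ).toReal := by simp
    _ ≤ _ := ENNReal.toReal_mono hlt.ne hx

lemma my_integrable_inner {X : Type*} [MeasurableSpace X] {μ : Measure X}
    {E : Type*} [NormedAddCommGroup E] [InnerProductSpace ℝ E]
    [SecondCountableTopology E]
    {f g : X → E} (hf : MemLp f ⊤ μ) (hg : Integrable g μ) :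
    Integrable (fun x => (inner ℝ (f x) (g x) : ℝ)) μ := by
  obtain ⟨C, hC0, hC⟩ := my_memTop_bound hf
  refine Integrable.mono' (hg.norm.const_mul C)
    (AEStronglyMeasurable.inner hf.1 hg.aestronglyMeasurable) ?_
  filter_upwards [hC] with x hx
  rw [Real.norm_eq_abs]
  exact le_trans (abs_real_inner_le_norm _ _)
    (mul_le_mul_of_nonneg_right hx (norm_nonneg _))

end Helpers


/-- **stability of `p`-regularization.** If the optimality mapping is
strongly subregular at a critical point `u*` with radius `κ̂ > 0`, then for every
`ε > 0` there is `η_ε > 0` such that for `0 < η < η_ε`, every local minimizer `u_η`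
of the regularized problem `min 𝒥(u) + (η/p)∫|u|ᵖ dμ` with `‖u_η − u*‖_{L¹} < κ̂`
satisfies `‖u_η − u*‖_{L¹} < ε`. -/
theorem stmt_19 {X : Type*} [MeasurableSpace X] {m : ℕ} (μ : Measure X)
    [IsFiniteMeasure μ] [NullSingletonClass μ]
    (U : Set (EuclideanSpace ℝ (Fin m)))
    (hUcpt : IsCompact U) (hUconv : Convex ℝ U) (hUnt : U.Nontrivial)
    (J : (X → EuclideanSpace ℝ (Fin m)) → ℝ) (hJ : WeakSeqContinuousOn μ U J)
    (DJ : (X → EuclideanSpace ℝ (Fin m)) → X → EuclideanSpace ℝ (Fin m))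
    (hDJinf : ∀ u ∈ Feasible μ U, MemLp (DJ u) ⊤ μ)
    (hGateaux : ∀ u ∈ Feasible μ U, ∀ v : X → EuclideanSpace ℝ (Fin m),
      u + v ∈ Feasible μ U →
      Tendsto (fun t : ℝ => (J (u + t • v) - J u) / t) (𝓝[>] 0)
        (𝓝 (∫ x, (inner ℝ (DJ u x) (v x) : ℝ) ∂μ)))
    (hWS : ∀ (un : ℕ → X → EuclideanSpace ℝ (Fin m)) (u : X → EuclideanSpace ℝ (Fin m)),
      (∀ n, un n ∈ Feasible μ U) → u ∈ Feasible μ U → WeakL1Conv μ un u →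
      Tendsto (fun n => eLpNorm (fun x => DJ (un n) x - DJ u x) ⊤ μ) atTop (𝓝 0))
    (ustar : X → EuclideanSpace ℝ (Fin m)) (hustar : ustar ∈ Feasible μ U)
    (hcrit : PhiMem μ U DJ ustar 0)
    (κhat : ℝ) (hκhat : 0 < κhat) (hsubreg : SubregAt μ U DJ ustar κhat)
    (p : ℝ) (hp : 1 < p) :
    ∀ ε > 0, ∃ ηε > 0, ∀ η : ℝ, 0 < η → η < ηε →
      ∀ uη ∈ Feasible μ U,
        (∃ r > 0, ∀ u ∈ Feasible μ U, ∫ x, ‖u x - uη x‖ ∂μ ≤ r →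
          J uη + (η / p) * ∫ x, ‖uη x‖ ^ p ∂μ ≤ J u + (η / p) * ∫ x, ‖u x‖ ^ p ∂μ) →
        ∫ x, ‖uη x - ustar x‖ ∂μ < κhat →
        ∫ x, ‖uη x - ustar x‖ ∂μ < ε := by
  intro ε hε
  obtain ⟨δ, hδ, hsub⟩ := hsubreg ε hε
  obtain ⟨M₀, hM₀⟩ := isBounded_iff_forall_norm_le.mp hUcpt.isBounded
  set M : ℝ := max M₀ 0 with hMdef
  have hM : ∀ w ∈ U, ‖w‖ ≤ M := fun w hw => le_trans (hM₀ w hw) (le_max_left _ _)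
  have hM0 : (0:ℝ) ≤ M := le_max_right _ _
  have hMp : (0:ℝ) ≤ M ^ (p - 1) := Real.rpow_nonneg hM0 _
  refine ⟨δ / (M ^ (p - 1) + 1), by positivity, ?_⟩
  intro η hη hηε uη huη hlocmin hκ
  obtain ⟨r, hr, hmin⟩ := hlocmin
  -- the perturbation ξ
  set ξ : X → EuclideanSpace ℝ (Fin m) :=
    fun x => (-η) • ((‖uη x‖ ^ (p - 2) : ℝ) • uη x) with hξdef
  have hξnorm : ∀ᵐ x ∂μ, ‖ξ x‖ ≤ η * M ^ (p - 1) := by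
    filter_upwards [huη.2] with x hx
    rw [hξdef]
    simp only [norm_smul, Real.norm_eq_abs, abs_neg, abs_of_pos hη,
      abs_of_nonneg (Real.rpow_nonneg (norm_nonneg _) _)]
    rw [my_rpow_mul_self hp (norm_nonneg _)]
    exact mul_le_mul_of_nonneg_left
      (Real.rpow_le_rpow (norm_nonneg _) (hM _ hx) (by linarith)) hη.le
  have hξaesm : AEStronglyMeasurable ξ μ :=
    ((my_hmap_continuous hp).comp_aestronglyMeasurable
      huη.1.aestronglyMeasurable).const_smul (-η)
  have hξmem : MemLp ξ ⊤ μ := by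
    refine ⟨hξaesm, ?_⟩
    rw [eLpNorm_exponent_top]
    exact lt_of_le_of_lt (eLpNormEssSup_le_of_ae_bound hξnorm) ENNReal.ofReal_lt_top
  have hξsmall : eLpNorm ξ ⊤ μ < ENNReal.ofReal δ := by
    rw [eLpNorm_exponent_top]
    refine lt_of_le_of_lt (eLpNormEssSup_le_of_ae_bound hξnorm) ?_
    rw [ENNReal.ofReal_lt_ofReal_iff hδ]
    have hlt : η * (M ^ (p - 1) + 1) < δ := by
      have h1 : η * (M ^ (p - 1) + 1) < (δ / (M ^ (p - 1) + 1)) * (M ^ (p - 1) + 1) :=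
        mul_lt_mul_of_pos_right hηε (by positivity)
      rwa [div_mul_cancel₀ δ (by positivity : (M ^ (p - 1) + 1) ≠ 0)] at h1
    nlinarith
  -- the variational inequality
  have hcone : ∀ v ∈ Feasible μ U,
      ∫ x, (inner ℝ (ξ x - DJ uη x) (v x - uη x) : ℝ) ∂μ ≤ 0 := by
    intro v hv
    set b : X → EuclideanSpace ℝ (Fin m) := v - uη with hbdef
    have hbx : ∀ x, b x = v x - uη x := fun x => rfl
    have hb : Integrable b μ := hv.1.sub huη.1
    have huv : uη + b = v := by funext x; simp [hbdef]
    -- Gateaux part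
    have hT1 : Tendsto (fun t : ℝ => (J (uη + t • b) - J uη) / t) (𝓝[>] 0)
        (𝓝 (∫ x, (inner ℝ (DJ uη x) (b x) : ℝ) ∂μ)) :=
      hGateaux uη huη b (by rw [huv]; exact hv)
    -- the function g and its integrability
    set g : X → ℝ := fun x => (inner ℝ ((‖uη x‖ ^ (p - 2) : ℝ) • uη x) (b x) : ℝ) with hgdef
    have hgaesm : AEStronglyMeasurable g μ :=
      AEStronglyMeasurable.inner
        ((my_hmap_continuous hp).comp_aestronglyMeasurable huη.1.aestronglyMeasurable)
        hb.aestronglyMeasurable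
    have hgbound : ∀ᵐ x ∂μ, ‖g x‖ ≤ M ^ (p - 1) * ‖b x‖ := by
      filter_upwards [huη.2] with x hx
      rw [Real.norm_eq_abs, hgdef]
      refine le_trans (abs_real_inner_le_norm _ _) ?_
      refine mul_le_mul_of_nonneg_right ?_ (norm_nonneg _)
      rw [norm_smul, Real.norm_eq_abs, abs_of_nonneg (Real.rpow_nonneg (norm_nonneg _) _),
        my_rpow_mul_self hp (norm_nonneg _)]
      exact Real.rpow_le_rpow (norm_nonneg _) (hM _ hx) (by linarith)
    have hgint : Integrable g μ :=
      Integrable.mono' (hb.norm.const_mul (M ^ (p - 1))) hgaesm hgbound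
    -- membership of the segment points
    have hmemseg : ∀ t ∈ Icc (0:ℝ) 1, ∀ x, uη x ∈ U → v x ∈ U →
        uη x + t • b x ∈ U := by
      intro t ht x h1 h2
      have := hUconv h1 h2 (by linarith [ht.2] : (0:ℝ) ≤ 1 - t) ht.1 (by ring)
      have heq : uη x + t • b x = (1 - t) • uη x + t • v x := by
        rw [hbx, smul_sub, sub_smul, one_smul]; abel
      rwa [heq]
    -- integrability of the p-th power terms
    have hint_pow : ∀ t ∈ Icc (0:ℝ) 1,
        Integrable (fun x => ‖(uη + t • b) x‖ ^ p) μ := by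
      intro t ht
      have hwint : Integrable (uη + t • b) μ := huη.1.add (hb.smul t)
      have haesm : AEStronglyMeasurable (fun x => ‖(uη + t • b) x‖ ^ p) μ :=
        (Real.continuous_rpow_const (by linarith : (0:ℝ) ≤ p)).comp_aestronglyMeasurable
          hwint.aestronglyMeasurable.norm
      refine Integrable.mono' (integrable_const (M ^ p)) haesm ?_
      filter_upwards [huη.2, hv.2] with x h1 h2
      have hmem : (uη + t • b) x ∈ U := by
        simpa using hmemseg t ht x h1 h2
      rw [Real.norm_eq_abs, abs_of_nonneg (Real.rpow_nonneg (norm_nonneg _) _)]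
      exact Real.rpow_le_rpow (norm_nonneg _) (hM _ hmem) (by linarith)
    have hint_uη : Integrable (fun x => ‖uη x‖ ^ p) μ := by
      have := hint_pow 0 ⟨le_refl 0, zero_le_one⟩
      simpa using this
    -- dominated convergence for the penalty difference quotients
    have hT2' : Tendsto
        (fun t : ℝ => ∫ x, (‖uη x + t • b x‖ ^ p - ‖uη x‖ ^ p) / t ∂μ) (𝓝[>] 0)
        (𝓝 (∫ x, p * g x ∂μ)) := by
      refine tendsto_integral_filter_of_dominated_convergence
        (fun x => p * M ^ (p - 1) * ‖b x‖) ?_ ?_ ((hb.norm.const_mul _)) ?_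
      · filter_upwards [self_mem_nhdsWithin] with t ht
        have hwint : Integrable (uη + t • b) μ := huη.1.add (hb.smul t)
        have haesm : AEStronglyMeasurable (fun x => ‖uη x + t • b x‖ ^ p) μ := by
          have := (Real.continuous_rpow_const
            (by linarith : (0:ℝ) ≤ p)).comp_aestronglyMeasurable
            hwint.aestronglyMeasurable.norm
          simpa using this
        have haesm2 : AEStronglyMeasurable (fun x => ‖uη x‖ ^ p) μ :=
          (Real.continuous_rpow_const (by linarith : (0:ℝ) ≤ p)).comp_aestronglyMeasurable
            huη.1.aestronglyMeasurable.norm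
        simp only [div_eq_mul_inv]
        exact (haesm.sub haesm2).mul aestronglyMeasurable_const
      · filter_upwards [Ioc_mem_nhdsGT_of_mem ⟨le_refl (0:ℝ), zero_lt_one⟩] with t ht
        filter_upwards [huη.2, hv.2] with x h1 h2
        have hmem : uη x + t • b x ∈ U := hmemseg t ⟨ht.1.le, ht.2⟩ x h1 h2
        have hlip : |‖uη x + t • b x‖ ^ p - ‖uη x‖ ^ p| ≤
            p * M ^ (p - 1) * |‖uη x + t • b x‖ - ‖uη x‖| :=
          my_abs_rpow_sub_rpow hp.le ⟨norm_nonneg _, hM _ hmem⟩ ⟨norm_nonneg _, hM _ h1⟩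
        have hdist : |‖uη x + t • b x‖ - ‖uη x‖| ≤ t * ‖b x‖ := by
          refine le_trans (abs_norm_sub_norm_le _ _) ?_
          simp [norm_smul, Real.norm_eq_abs, abs_of_pos ht.1]
        rw [Real.norm_eq_abs, abs_div, abs_of_pos ht.1, div_le_iff₀ ht.1]
        calc |‖uη x + t • b x‖ ^ p - ‖uη x‖ ^ p|
            ≤ p * M ^ (p - 1) * (t * ‖b x‖) := le_trans hlip
              (mul_le_mul_of_nonneg_left hdist (by positivity))
          _ = p * M ^ (p - 1) * ‖b x‖ * t := by ring
      · filter_upwards [] with x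
        exact my_slope_tendsto hp (uη x) (b x)
    have hT2 : Tendsto
        (fun t : ℝ => ((∫ x, ‖(uη + t • b) x‖ ^ p ∂μ) - ∫ x, ‖uη x‖ ^ p ∂μ) / t) (𝓝[>] 0)
        (𝓝 (∫ x, p * g x ∂μ)) := by
      refine hT2'.congr' ?_
      filter_upwards [Ioc_mem_nhdsGT_of_mem ⟨le_refl (0:ℝ), zero_lt_one⟩] with t ht
      have h1 : Integrable (fun x => ‖(uη + t • b) x‖ ^ p) μ := hint_pow t ⟨ht.1.le, ht.2⟩
      rw [← integral_sub h1 hint_uη, ← integral_div]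
      rfl
    -- the eventual inequality coming from local minimality
    set B : ℝ := ∫ x, ‖b x‖ ∂μ with hBdef
    have hB0 : 0 ≤ B := integral_nonneg (fun x => norm_nonneg _)
    set t₁ : ℝ := min 1 (r / (B + 1)) with ht₁def
    have ht₁pos : 0 < t₁ := lt_min zero_lt_one (by positivity)
    have hev : ∀ᶠ t in 𝓝[>] (0:ℝ), 0 ≤ (J (uη + t • b) - J uη) / t +
        (η / p) * (((∫ x, ‖(uη + t • b) x‖ ^ p ∂μ) - ∫ x, ‖uη x‖ ^ p ∂μ) / t) := by
      filter_upwards [Ioc_mem_nhdsGT_of_mem ⟨le_refl (0:ℝ), ht₁pos⟩] with t ht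
      have ht1 : t ≤ 1 := le_trans ht.2 (min_le_left _ _)
      have htr : t ≤ r / (B + 1) := le_trans ht.2 (min_le_right _ _)
      have hfeas : uη + t • b ∈ Feasible μ U := by
        refine ⟨huη.1.add (hb.smul t), ?_⟩
        filter_upwards [huη.2, hv.2] with x h1 h2
        simpa using hmemseg t ⟨ht.1.le, ht1⟩ x h1 h2
      have hdist : ∫ x, ‖(uη + t • b) x - uη x‖ ∂μ ≤ r := by
        have heq : (fun x => ‖(uη + t • b) x - uη x‖) = fun x => t * ‖b x‖ := by
          funext x
          simp [norm_smul, Real.norm_eq_abs, abs_of_pos ht.1]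
        rw [heq, integral_const_mul]
        have h2 : t * (B + 1) ≤ r := by
          rw [← div_mul_cancel₀ r (by positivity : (B + 1) ≠ 0)]
          exact mul_le_mul_of_nonneg_right htr (by positivity)
        nlinarith
      have hloc := hmin (uη + t • b) hfeas hdist
      have h0 : 0 ≤ (J (uη + t • b) - J uη) +
          (η / p * (∫ x, ‖(uη + t • b) x‖ ^ p ∂μ) - η / p * ∫ x, ‖uη x‖ ^ p ∂μ) := by
        linarith
      have h2 := div_nonneg h0 ht.1.le
      have h3 : (J (uη + t • b) - J uη) / t +
          (η / p) * (((∫ x, ‖(uη + t • b) x‖ ^ p ∂μ) - ∫ x, ‖uη x‖ ^ p ∂μ) / t) =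
          ((J (uη + t • b) - J uη) +
            (η / p * (∫ x, ‖(uη + t • b) x‖ ^ p ∂μ) - η / p * ∫ x, ‖uη x‖ ^ p ∂μ)) / t := by
        ring
      rw [h3]
      exact h2
    -- pass to the limit in the inequality
    have hsumT : Tendsto (fun t : ℝ => (J (uη + t • b) - J uη) / t +
        (η / p) * (((∫ x, ‖(uη + t • b) x‖ ^ p ∂μ) - ∫ x, ‖uη x‖ ^ p ∂μ) / t)) (𝓝[>] 0)
        (𝓝 ((∫ x, (inner ℝ (DJ uη x) (b x) : ℝ) ∂μ) + (η / p) * ∫ x, p * g x ∂μ)) :=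
      hT1.add (hT2.const_mul (η / p))
    have hkey : 0 ≤ (∫ x, (inner ℝ (DJ uη x) (b x) : ℝ) ∂μ) + (η / p) * ∫ x, p * g x ∂μ :=
      ge_of_tendsto hsumT hev
    have hpg : ∫ x, p * g x ∂μ = p * ∫ x, g x ∂μ := integral_const_mul p g
    have hkey2 : 0 ≤ (∫ x, (inner ℝ (DJ uη x) (b x) : ℝ) ∂μ) + η * ∫ x, g x ∂μ := by
      rw [hpg] at hkey
      have hpne : p ≠ 0 := by linarith
      calc (0:ℝ) ≤ (∫ x, (inner ℝ (DJ uη x) (b x) : ℝ) ∂μ) + η / p * (p * ∫ x, g x ∂μ) := hkey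
        _ = (∫ x, (inner ℝ (DJ uη x) (b x) : ℝ) ∂μ) + η * ∫ x, g x ∂μ := by
            rw [← mul_assoc, div_mul_cancel₀ η hpne]
    -- now conclude the normal cone inequality
    have hinner1 : (fun x => (inner ℝ (ξ x) (b x) : ℝ)) = fun x => -η * g x := by
      funext x
      rw [hξdef, hgdef]
      simp only [real_inner_smul_left]
    have hint1 : Integrable (fun x => (inner ℝ (ξ x) (b x) : ℝ)) μ := by
      rw [hinner1]; exact hgint.const_mul (-η)
    have hint2 : Integrable (fun x => (inner ℝ (DJ uη x) (b x) : ℝ)) μ :=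
      my_integrable_inner (hDJinf uη huη) hb
    have hsplit : ∫ x, (inner ℝ (ξ x - DJ uη x) (v x - uη x) : ℝ) ∂μ =
        (∫ x, (inner ℝ (ξ x) (b x) : ℝ) ∂μ) - ∫ x, (inner ℝ (DJ uη x) (b x) : ℝ) ∂μ := by
      rw [← integral_sub hint1 hint2]
      congr 1
      funext x
      rw [← hbx, inner_sub_left]
    rw [hsplit, hinner1, integral_const_mul]
    linarith
  exact hsub uη huη ξ ⟨hξmem, hcone⟩ hκ.le hξsmall
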